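/- Suppose f: ℝⁿ → ℝⁿ is differentiable, and there exist a differentiable φ: ℝⁿ → ℝ^N with Jacobian Φ(x) of full column rank for all x, constants a₁, a₂ > 0 with a₁ I ⪯ Φ(x)ᵀΦ(x) ⪯ a₂ I, a matrix A with φ∘f = A φ, and a symmetric P ≻ 0 with P - AᵀPA ⪰ ρP for some ρ ∈ (0,1). Then M(x) := Φ(x)ᵀPΦ(x) satisfies the contraction condition: F(x)ᵀ M(f(x)) F(x) - M(x) ⪯ -β M(x) for all x, with β = ρ λ_min(P)/λ_max(P) ∈ (0,1). -/

import Mathlib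

open Matrix

theorem stmt5 {n N : ℕ} (hN : 0 < N)
    (f : (Fin n → ℝ) → (Fin n → ℝ))
    (φ : (Fin n → ℝ) → (Fin N → ℝ))
    (F : (Fin n → ℝ) → Matrix (Fin n) (Fin n) ℝ)
    (Φ : (Fin n → ℝ) → Matrix (Fin N) (Fin n) ℝ)
    (A : Matrix (Fin N) (Fin N) ℝ)
    (P : Matrix (Fin N) (Fin N) ℝ)
    (a₁ a₂ ρ : ℝ) (ha₁ : 0 < a₁) (ha₂ : 0 < a₂) (hρ : ρ ∈ Set.Ioo (0 : ℝ) 1)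
    (hf : ∀ x, HasFDerivAt f (LinearMap.toContinuousLinearMap (F x).mulVecLin) x)
    (hφ : ∀ x, HasFDerivAt φ (LinearMap.toContinuousLinearMap (Φ x).mulVecLin) x)
    (hrank : ∀ x, (Φ x).rank = n)
    (hlow : ∀ x, ((Φ x)ᵀ * Φ x - a₁ • (1 : Matrix (Fin n) (Fin n) ℝ)).PosSemidef)
    (hup : ∀ x, (a₂ • (1 : Matrix (Fin n) (Fin n) ℝ) - (Φ x)ᵀ * Φ x).PosSemidef)
    (hAeq : ∀ x, φ (f x) = A.mulVec (φ x))
    (hPsymm : Pᵀ = P) (hP : P.PosDef)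
    (hLyap : (P - Aᵀ * P * A - ρ • P).PosSemidef) :
    0 < ρ * (⨅ i, hP.1.eigenvalues i) / (⨆ i, hP.1.eigenvalues i) ∧
    ρ * (⨅ i, hP.1.eigenvalues i) / (⨆ i, hP.1.eigenvalues i) < 1 ∧
    ∀ x,
      ((1 - ρ * (⨅ i, hP.1.eigenvalues i) / (⨆ i, hP.1.eigenvalues i)) •
          ((Φ x)ᵀ * P * Φ x) -
        (F x)ᵀ * ((Φ (f x))ᵀ * P * Φ (f x)) * F x).PosSemidef := by
  haveI : Nonempty (Fin N) := ⟨⟨0, hN⟩⟩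
  set lmin := ⨅ i, hP.1.eigenvalues i with hlmin
  set lmax := ⨆ i, hP.1.eigenvalues i with hlmax
  have hev : ∀ i, 0 < hP.1.eigenvalues i := hP.eigenvalues_pos
  have hminpos : 0 < lmin := by
    obtain ⟨i, hi⟩ := Finite.exists_min (hP.1.eigenvalues)
    have : lmin = hP.1.eigenvalues i :=
      le_antisymm (ciInf_le (Finite.bddBelow_range _) i) (le_ciInf hi)
    rw [this]; exact hev i
  have hminle : lmin ≤ lmax := by
    refine le_trans (ciInf_le (Finite.bddBelow_range _) (Classical.arbitrary _))
      (le_ciSup (Finite.bddAbove_range _) _)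
  have hmaxpos : 0 < lmax := lt_of_lt_of_le hminpos hminle
  set β := ρ * lmin / lmax with hβ
  have hβpos : 0 < β := div_pos (mul_pos hρ.1 hminpos) hmaxpos
  have hβleρ : β ≤ ρ := by
    rw [hβ, div_le_iff₀ hmaxpos]
    nlinarith [hρ.1]
  have hβlt1 : β < 1 := lt_of_le_of_lt hβleρ hρ.2
  refine ⟨hβpos, hβlt1, fun x => ?_⟩
  -- chain rule identity : Φ (f x) * F x = A * Φ x
  have hkey : Φ (f x) * F x = A * Φ x := by
    have h1 : HasFDerivAt (φ ∘ f)
        ((LinearMap.toContinuousLinearMap (Φ (f x)).mulVecLin).comp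
          (LinearMap.toContinuousLinearMap (F x).mulVecLin)) x :=
      (hφ (f x)).comp x (hf x)
    have h2 : HasFDerivAt (φ ∘ f)
        ((LinearMap.toContinuousLinearMap A.mulVecLin).comp
          (LinearMap.toContinuousLinearMap (Φ x).mulVecLin)) x := by
      have hlin : HasFDerivAt (fun v => A.mulVec v)
          (LinearMap.toContinuousLinearMap A.mulVecLin) (φ x) :=
        (LinearMap.toContinuousLinearMap A.mulVecLin).hasFDerivAt
      have := hlin.comp x (hφ x)
      rw [show φ ∘ f = (fun v => A *ᵥ v) ∘ φ from by funext y; simp [Function.comp, hAeq]]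
      exact this
    have h3 := h1.unique h2
    ext i j
    have h4 := congrFun (congrArg DFunLike.coe h3) (Pi.single j 1)
    simp only [ContinuousLinearMap.coe_comp', Function.comp_apply,
      LinearMap.coe_toContinuousLinearMap', Matrix.mulVecLin_apply] at h4
    have := congrFun h4 i
    simpa [Matrix.mulVec_single_one, Matrix.mul_apply, Matrix.mulVec, dotProduct,
      Pi.single_apply, mul_comm] using this
  -- main algebra
  have hconj : ∀ (M : Matrix (Fin N) (Fin N) ℝ) (B : Matrix (Fin N) (Fin n) ℝ),
      M.PosSemidef → (Bᵀ * M * B).PosSemidef := by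
    intro M B hM
    have := hM.conjTranspose_mul_mul_same B
    simpa [Matrix.conjTranspose_eq_transpose_of_trivial] using this
  have hmid : ((1 - β) • P - Aᵀ * P * A).PosSemidef := by
    have hρβ : (0:ℝ) ≤ ρ - β := by linarith
    have h5 : ((ρ - β) • P).PosSemidef := by
      refine ⟨?_, fun v => ?_⟩
      · show ((ρ - β) • P)ᴴ = (ρ - β) • P
        rw [Matrix.conjTranspose_smul]
        simp [hP.posSemidef.1.eq, hPsymm]
      · exact (hP.posSemidef.smul hρβ).2 v
    have h6 := hLyap.add h5
    have : P - Aᵀ * P * A - ρ • P + (ρ - β) • P = (1 - β) • P - Aᵀ * P * A := by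
      module
    rwa [this] at h6
  have := hconj _ (Φ x) hmid
  have heq : (Φ x)ᵀ * ((1 - β) • P - Aᵀ * P * A) * Φ x =
      (1 - β) • ((Φ x)ᵀ * P * Φ x) - (F x)ᵀ * ((Φ (f x))ᵀ * P * Φ (f x)) * F x := by
    have h7 : (F x)ᵀ * ((Φ (f x))ᵀ * P * Φ (f x)) * F x =
        (Φ x)ᵀ * (Aᵀ * P * A) * Φ x := by
      have : (Φ (f x) * F x)ᵀ * P * (Φ (f x) * F x) = (A * Φ x)ᵀ * P * (A * Φ x) := by
        rw [hkey]
      simpa [Matrix.transpose_mul, Matrix.mul_assoc] using this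
    rw [h7]
    rw [Matrix.mul_sub, Matrix.sub_mul, Matrix.mul_smul, Matrix.smul_mul]
  rwa [heq] at this
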